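/- Let d ≥ 1 be an integer, 0 < α < 2, 0 < β < 1 with α/β < d < α(1+β)/β. Let q : ℝ^d → [0,∞) be measurable with c₁/(1+‖x‖^{d+α}) ≤ q(x) ≤ c₂/(1+‖x‖^{d+α}) for some constants c₁, c₂ > 0, and set p_t(x) = t^{−d/α} q(t^{−1/α} x) for t > 0. Fix 0 ≤ u < v < s < t and z > 0, and for T > 0 define U_T(x,r) = z( 𝟙_{[0,s+T]}(r) ∫_{s+T}^{t+T} p_{r'−r}(x) dr' + 𝟙_{(s+T,t+T]}(r) ∫_r^{t+T} p_{r'−r}(x) dr' ) and R(x,r) = 𝟙_{[0,u]}(r) ∫_u^v p_{r'−r}(x) dr' + 𝟙_{(u,v]}(r) ∫_r^v p_{r'−r}(x) dr'. Then there exist C > 0 and T₀ > 0 such that for all T ≥ T₀: ∫_{ℝ^d} ∫_0^∞ ( (U_T+R)^{1+β} − U_T^{1+β} − R^{1+β} )(x,r) dr dx ≥ C·T^{−d/α}. -/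

import Mathlib

open MeasureTheory

lemma aux_tangent {a b p : ℝ} (ha : 0 < a) (hb : 0 ≤ b) (hp : 1 ≤ p) :
    a ^ p + p * a ^ (p - 1) * b ≤ (a + b) ^ p := by
  have hdiv : (-1 : ℝ) ≤ b / a := le_trans (by norm_num : (-1:ℝ) ≤ 0) (by positivity)
  have hber := one_add_mul_self_le_rpow_one_add hdiv hp
  have hap : (0:ℝ) < a ^ p := Real.rpow_pos_of_pos ha p
  have hkey : (a + b) ^ p = a ^ p * (1 + b / a) ^ p := by
    rw [← Real.mul_rpow ha.le (by positivity)]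
    congr 1
    field_simp
  rw [hkey]
  have h2 : a ^ p * (1 + p * (b / a)) ≤ a ^ p * (1 + b / a) ^ p :=
    mul_le_mul_of_nonneg_left hber hap.le
  refine le_trans (le_of_eq ?_) h2
  have hpm : a ^ (p - 1) = a ^ p / a := by
    rw [Real.rpow_sub ha, Real.rpow_one]
  rw [hpm]
  field_simp

lemma key_ineq {a b β : ℝ} (hβ0 : 0 < β) (ha : 0 < a) (hb : 0 < b)
    (hba : b ^ β ≤ a ^ β / 2) :
    b * (a ^ β / 2) ≤ (b + a) ^ (1 + β) - b ^ (1 + β) - a ^ (1 + β) := by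
  have hp : (1:ℝ) ≤ 1 + β := by linarith
  have htan := aux_tangent ha hb.le hp
  have h1 : (1 + β) - 1 = β := by ring
  rw [h1] at htan
  have hbp : b ^ (1 + β) = b * b ^ β := by
    rw [Real.rpow_add hb, Real.rpow_one]
  have haβ : 0 < a ^ β := Real.rpow_pos_of_pos ha β
  have hcomm : b + a = a + b := add_comm _ _
  rw [hcomm, hbp]
  have hmul : b * b ^ β ≤ b * (a ^ β / 2) := mul_le_mul_of_nonneg_left hba hb.le
  nlinarith [mul_pos (mul_pos hβ0 haβ) hb]

lemma interval_integrable_of_bdd {f : ℝ → ℝ} (hm : Measurable f) {a b M : ℝ} (hab : a ≤ b)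
    (hbd : ∀ y ∈ Set.Ioc a b, |f y| ≤ M) : IntervalIntegrable f volume a b := by
  rw [intervalIntegrable_iff_integrableOn_Ioc_of_le hab]
  refine Integrable.mono' (g := fun _ => M)
    (integrableOn_const measure_Ioc_lt_top.ne) hm.aestronglyMeasurable.restrict ?_
  exact (ae_restrict_iff' measurableSet_Ioc).2 (ae_of_all _ fun y hy => by
    simpa [Real.norm_eq_abs] using hbd y hy)


noncomputable def pker (d : ℕ) (α : ℝ) (q : EuclideanSpace ℝ (Fin d) → ℝ) (t : ℝ)
    (x : EuclideanSpace ℝ (Fin d)) : ℝ :=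
  t ^ (-(d : ℝ) / α) * q ((t ^ (-(1 : ℝ) / α)) • x)

section PK
variable {d : ℕ} {α : ℝ} {q : EuclideanSpace ℝ (Fin d) → ℝ} {c₁ c₂ : ℝ}

lemma pker_meas (hqm : Measurable q) (x : EuclideanSpace ℝ (Fin d)) :
    Measurable fun τ : ℝ => pker d α q τ x := by
  have h1 : ∀ c : ℝ, Measurable fun τ : ℝ => τ ^ c := fun c =>
    measurable_of_continuousOn_compl_singleton 0
      (fun τ hτ => (Real.continuousAt_rpow_const τ c
        (Or.inl (Set.mem_compl_singleton_iff.1 hτ))).continuousWithinAt)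
  unfold pker
  exact (h1 _).mul (hqm.comp ((h1 _).smul_const x))

lemma pker_nonneg (hq0 : ∀ x, 0 ≤ q x) {τ : ℝ} (hτ : 0 ≤ τ)
    (x : EuclideanSpace ℝ (Fin d)) : 0 ≤ pker d α q τ x :=
  mul_nonneg (Real.rpow_nonneg hτ _) (hq0 _)

lemma pker_low (hα0 : 0 < α) (hd : 1 ≤ d) (hc₁ : 0 < c₁)
    (hq1 : ∀ x, c₁ / (1 + ‖x‖ ^ ((d : ℝ) + α)) ≤ q x)
    {τ₀ τ₁ τ : ℝ} {x : EuclideanSpace ℝ (Fin d)}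
    (h0 : 0 < τ₀) (h1 : τ₀ ≤ τ) (h2 : τ ≤ τ₁) (hx : ‖x‖ ≤ 1) :
    τ₁ ^ (-(d : ℝ) / α) * (c₁ / (1 + (τ₀ ^ (-(1 : ℝ) / α)) ^ ((d : ℝ) + α)))
      ≤ pker d α q τ x := by
  have hτ : 0 < τ := h0.trans_le h1
  have hτ1 : 0 < τ₁ := hτ.trans_le h2
  have hea : -(1 : ℝ) / α ≤ 0 := by
    apply div_nonpos_of_nonpos_of_nonneg <;> linarith
  have hed : -(d : ℝ) / α ≤ 0 := by
    apply div_nonpos_of_nonpos_of_nonneg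
    · simp
    · linarith
  unfold pker
  have hnorm : ‖(τ ^ (-(1 : ℝ) / α)) • x‖ ≤ τ₀ ^ (-(1 : ℝ) / α) := by
    rw [norm_smul, Real.norm_eq_abs, abs_of_pos (Real.rpow_pos_of_pos hτ _)]
    calc τ ^ (-(1:ℝ)/α) * ‖x‖ ≤ τ ^ (-(1:ℝ)/α) * 1 :=
          mul_le_mul_of_nonneg_left hx (Real.rpow_nonneg hτ.le _)
      _ = τ ^ (-(1:ℝ)/α) := mul_one _
      _ ≤ τ₀ ^ (-(1:ℝ)/α) := Real.rpow_le_rpow_of_nonpos h0 h1 hea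
  have hda : (0:ℝ) ≤ (d : ℝ) + α := by positivity
  have hq' : c₁ / (1 + (τ₀ ^ (-(1:ℝ)/α)) ^ ((d:ℝ) + α)) ≤ q ((τ ^ (-(1:ℝ)/α)) • x) := by
    refine le_trans ?_ (hq1 _)
    have hle : ‖(τ ^ (-(1:ℝ)/α)) • x‖ ^ ((d:ℝ) + α) ≤ (τ₀ ^ (-(1:ℝ)/α)) ^ ((d:ℝ) + α) :=
      Real.rpow_le_rpow (norm_nonneg _) hnorm hda
    have hpos : (0:ℝ) < 1 + ‖(τ ^ (-(1:ℝ)/α)) • x‖ ^ ((d:ℝ) + α) := by positivity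
    exact div_le_div_of_nonneg_left hc₁.le hpos (by linarith)
  have hpow : τ₁ ^ (-(d:ℝ)/α) ≤ τ ^ (-(d:ℝ)/α) :=
    Real.rpow_le_rpow_of_nonpos hτ h2 hed
  refine mul_le_mul hpow hq' (by positivity) (Real.rpow_nonneg hτ.le _)

lemma pker_upC (hα0 : 0 < α) (hc₂ : 0 < c₂)
    (hq2 : ∀ x, q x ≤ c₂ / (1 + ‖x‖ ^ ((d : ℝ) + α)))
    {τ : ℝ} (hτ : 0 ≤ τ) (x : EuclideanSpace ℝ (Fin d)) :
    pker d α q τ x ≤ τ ^ (-(d : ℝ) / α) * c₂ := by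
  unfold pker
  have h2 : q ((τ ^ (-(1:ℝ)/α)) • x) ≤ c₂ := by
    refine le_trans (hq2 _) ?_
    have : (0:ℝ) ≤ ‖(τ ^ (-(1:ℝ)/α)) • x‖ ^ ((d:ℝ) + α) := by positivity
    exact div_le_self hc₂.le (by linarith)
  exact mul_le_mul_of_nonneg_left h2 (Real.rpow_nonneg hτ _)

lemma pker_upL (hα0 : 0 < α) (hd : 1 ≤ d) (hc₂ : 0 < c₂)
    (hq0 : ∀ x, 0 ≤ q x)
    (hq2 : ∀ x, q x ≤ c₂ / (1 + ‖x‖ ^ ((d : ℝ) + α)))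
    {L τ : ℝ} {x : EuclideanSpace ℝ (Fin d)}
    (hτ0 : 0 ≤ τ) (hτL : τ ≤ L) (hx : 1/2 ≤ ‖x‖) :
    pker d α q τ x ≤ c₂ * 2 ^ ((d : ℝ) + α) * L := by
  have hd0 : (0:ℝ) < d := by exact_mod_cast Nat.lt_of_lt_of_le Nat.zero_lt_one hd
  have hedne : -(d : ℝ) / α ≠ 0 := by
    apply div_ne_zero
    · simp; linarith
    · linarith
  have hda : (0:ℝ) < (d : ℝ) + α := by linarith
  rcases eq_or_lt_of_le hτ0 with h0 | hτ
  · rw [← h0]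
    unfold pker
    rw [Real.zero_rpow hedne, zero_mul]
    have hL : (0:ℝ) ≤ L := by linarith
    positivity
  · unfold pker
    set y := (τ ^ (-(1:ℝ)/α)) • x with hy
    have hτa : (0:ℝ) < τ ^ (-(1:ℝ)/α) := Real.rpow_pos_of_pos hτ _
    have hny : ‖y‖ = τ ^ (-(1:ℝ)/α) * ‖x‖ := by
      rw [hy, norm_smul, Real.norm_eq_abs, abs_of_pos hτa]
    have hny0 : (0:ℝ) < ‖y‖ := by rw [hny]; positivity
    have hq' : q y ≤ c₂ * ‖y‖ ^ (-((d:ℝ) + α)) := by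
      rw [Real.rpow_neg hny0.le, ← div_eq_mul_inv]
      refine le_trans (hq2 _) ?_
      have h1 : (0:ℝ) < ‖y‖ ^ ((d:ℝ) + α) := Real.rpow_pos_of_pos hny0 _
      exact div_le_div_of_nonneg_left hc₂.le h1 (by linarith)
    have hxp : ‖x‖ ^ (-((d:ℝ) + α)) ≤ (1/2 : ℝ) ^ (-((d:ℝ) + α)) :=
      Real.rpow_le_rpow_of_nonpos (by norm_num) hx (by linarith)
    have hhalf : ((1:ℝ)/2) ^ (-((d:ℝ) + α)) = 2 ^ ((d:ℝ) + α) := by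
      rw [one_div, Real.inv_rpow (by norm_num), ← Real.rpow_neg (by norm_num), neg_neg]
    have hyp : ‖y‖ ^ (-((d:ℝ) + α))
        = τ ^ (((d:ℝ) + α) / α) * ‖x‖ ^ (-((d:ℝ) + α)) := by
      rw [hny, Real.mul_rpow hτa.le (norm_nonneg x)]
      congr 1
      rw [← Real.rpow_mul hτ0]
      congr 1
      field_simp
    calc τ ^ (-(d:ℝ)/α) * q y ≤ τ ^ (-(d:ℝ)/α) * (c₂ * ‖y‖ ^ (-((d:ℝ) + α))) :=
          mul_le_mul_of_nonneg_left hq' (Real.rpow_nonneg hτ0 _)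
      _ = c₂ * ((τ ^ (-(d:ℝ)/α) * τ ^ (((d:ℝ) + α) / α)) * ‖x‖ ^ (-((d:ℝ) + α))) := by
          rw [hyp]; ring
      _ = c₂ * (τ * ‖x‖ ^ (-((d:ℝ) + α))) := by
          rw [← Real.rpow_add hτ]
          congr 2
          rw [show -(d:ℝ)/α + ((d:ℝ) + α)/α = 1 by field_simp; ring, Real.rpow_one]
      _ ≤ c₂ * (L * 2 ^ ((d:ℝ) + α)) := by
          have h2 : (0:ℝ) < 2 ^ ((d:ℝ) + α) := by positivity
          have hxx : ‖x‖ ^ (-((d:ℝ) + α)) ≤ 2 ^ ((d:ℝ) + α) := hhalf ▸ hxp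
          have : τ * ‖x‖ ^ (-((d:ℝ) + α)) ≤ L * 2 ^ ((d:ℝ) + α) :=
            mul_le_mul hτL hxx (Real.rpow_nonneg (norm_nonneg _) _) (by linarith)
          exact mul_le_mul_of_nonneg_left this hc₂.le
      _ = c₂ * 2 ^ ((d:ℝ) + α) * L := by ring
end PK

set_option maxHeartbeats 1000000 in
/-- Lower bound (4.5) for `D_T^+`: for `T` large enough,
`∫_{ℝ^d}∫_0^∞ ((U_T+R)^{1+β} − U_T^{1+β} − R^{1+β}) dr dx ≥ C T^{−d/α}`. -/
theorem stmt11 (d : ℕ) (hd : 1 ≤ d) (α β : ℝ) (hα0 : 0 < α) (hα2 : α < 2)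
    (hβ0 : 0 < β) (hβ1 : β < 1)
    (hdim1 : α / β < d) (hdim2 : (d : ℝ) < α * (1 + β) / β)
    (q : EuclideanSpace ℝ (Fin d) → ℝ) (hqm : Measurable q) (hq0 : ∀ x, 0 ≤ q x)
    (c₁ c₂ : ℝ) (hc₁ : 0 < c₁) (hc₂ : 0 < c₂)
    (hq1 : ∀ x, c₁ / (1 + ‖x‖ ^ ((d : ℝ) + α)) ≤ q x)
    (hq2 : ∀ x, q x ≤ c₂ / (1 + ‖x‖ ^ ((d : ℝ) + α)))
    (u v s t z : ℝ) (hu : 0 ≤ u) (huv : u < v) (hvs : v < s) (hst : s < t) (hz : 0 < z)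
    (U : ℝ → EuclideanSpace ℝ (Fin d) → ℝ → ℝ)
    (hU : ∀ T x r, U T x r = z *
      ((Set.Icc (0:ℝ) (s + T)).indicator
          (fun _ => ∫ r' in (s + T)..(t + T), pker d α q (r' - r) x) r +
        (Set.Ioc (s + T) (t + T)).indicator
          (fun _ => ∫ r' in r..(t + T), pker d α q (r' - r) x) r))
    (R : EuclideanSpace ℝ (Fin d) → ℝ → ℝ)
    (hR : ∀ x r, R x r =
      (Set.Icc (0:ℝ) u).indicator (fun _ => ∫ r' in u..v, pker d α q (r' - r) x) r +
        (Set.Ioc u v).indicator (fun _ => ∫ r' in r..v, pker d α q (r' - r) x) r) :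
    ∃ C : ℝ, 0 < C ∧ ∃ T₀ : ℝ, 0 < T₀ ∧ ∀ T : ℝ, T₀ ≤ T →
      ENNReal.ofReal (C * T ^ (-(d : ℝ) / α)) ≤
        ∫⁻ x : EuclideanSpace ℝ (Fin d), ∫⁻ r in Set.Ioi (0:ℝ),
          ENNReal.ofReal
            ((U T x r + R x r) ^ (1 + β) - (U T x r) ^ (1 + β) - (R x r) ^ (1 + β)) := by
  -- basic positivity facts
  have hd0 : (0:ℝ) < d := by exact_mod_cast Nat.lt_of_lt_of_le Nat.zero_lt_one hd
  have hed : -(d : ℝ) / α ≤ 0 := by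
    apply div_nonpos_of_nonpos_of_nonneg
    · linarith
    · linarith
  have hdα : (0:ℝ) < (d:ℝ) / α := by positivity
  -- midpoints
  set m : ℝ := (u + v) / 2 with hm_def
  set m2 : ℝ := (m + v) / 2 with hm2_def
  have hum : u < m := by rw [hm_def]; linarith
  have hmm2 : m < m2 := by rw [hm2_def, hm_def]; linarith
  have hm2v : m2 < v := by rw [hm2_def, hm_def]; linarith
  have hmv : m < v := by linarith
  have hms : m < s := by linarith
  -- constants
  set εpt : ℝ := (v - u) ^ (-(d:ℝ)/α) *
    (c₁ / (1 + ((m2 - m) ^ (-(1:ℝ)/α)) ^ ((d:ℝ) + α))) with hεpt_def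
  have hεpt : 0 < εpt := by
    rw [hεpt_def]
    have h1 : (0:ℝ) < (v - u) ^ (-(d:ℝ)/α) := Real.rpow_pos_of_pos (by linarith) _
    have h2 : (0:ℝ) < ((m2 - m) ^ (-(1:ℝ)/α)) ^ ((d:ℝ) + α) :=
      Real.rpow_pos_of_pos (Real.rpow_pos_of_pos (by linarith) _) _
    have h3 : (0:ℝ) < c₁ / (1 + ((m2 - m) ^ (-(1:ℝ)/α)) ^ ((d:ℝ) + α)) := by positivity
    positivity
  set εR : ℝ := (v - m2) * εpt with hεR_def
  have hεR : 0 < εR := mul_pos (by linarith) hεpt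
  set δ : ℝ := εR * (1/2 : ℝ) ^ ((1:ℝ)/β) with hδ_def
  have hδ : 0 < δ := by
    rw [hδ_def]
    have : (0:ℝ) < (1/2 : ℝ) ^ ((1:ℝ)/β) := Real.rpow_pos_of_pos (by norm_num) _
    positivity
  have hδβ : δ ^ β = εR ^ β / 2 := by
    rw [hδ_def, Real.mul_rpow hεR.le (Real.rpow_nonneg (by norm_num) _),
      ← Real.rpow_mul (by norm_num : (0:ℝ) ≤ 1/2),
      one_div_mul_cancel hβ0.ne', Real.rpow_one]
    ring
  set δ₀ : ℝ := δ / (z * (t - s) * c₂) with hδ₀_def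
  have hzts : (0:ℝ) < z * (t - s) * c₂ := by
    apply mul_pos (mul_pos hz (by linarith)) hc₂
  have hδ₀ : 0 < δ₀ := div_pos hδ hzts
  -- choose threshold from the decay of x ^ (-(d/α))
  have htend := tendsto_rpow_neg_atTop hdα
  obtain ⟨X, hX⟩ := Filter.eventually_atTop.1 (htend.eventually_lt_const hδ₀)
  set T₀ : ℝ := max (max t 1) (1 + (m - s) + max X 1) with hT₀_def
  have hT₀1 : (1:ℝ) ≤ T₀ := le_trans (le_max_right t 1) (le_max_left _ _)
  have hT₀pos : (0:ℝ) < T₀ := by linarith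
  -- the base point and ball
  set x₀ : EuclideanSpace ℝ (Fin d) :=
    (3/4 : ℝ) • EuclideanSpace.single (⟨0, hd⟩ : Fin d) (1:ℝ) with hx₀_def
  have hx₀norm : ‖x₀‖ = 3/4 := by
    rw [hx₀_def, norm_smul, Real.norm_eq_abs, EuclideanSpace.norm_single]
    norm_num
  set A : Set (EuclideanSpace ℝ (Fin d)) := Metric.ball x₀ (1/8 : ℝ) with hA_def
  have hAnorm : ∀ y ∈ A, 1/2 ≤ ‖y‖ ∧ ‖y‖ ≤ 1 := by
    intro y hy
    rw [hA_def, Metric.mem_ball, dist_eq_norm] at hy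
    have h1 : ‖x₀‖ - ‖y‖ ≤ ‖y - x₀‖ := by
      have := norm_sub_norm_le (y - x₀) y
      simp at this
      have h2 := norm_sub_norm_le x₀ y
      calc ‖x₀‖ - ‖y‖ ≤ ‖x₀ - y‖ := norm_sub_norm_le x₀ y
        _ = ‖y - x₀‖ := norm_sub_rev x₀ y
    have h3 : ‖y‖ - ‖x₀‖ ≤ ‖y - x₀‖ := norm_sub_norm_le y x₀
    constructor
    · rw [hx₀norm] at h1; linarith
    · rw [hx₀norm] at h3; linarith
  have hvolA_pos : 0 < volume A := Metric.measure_ball_pos volume x₀ (by norm_num)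
  have hvolA_fin : volume A ≠ ⊤ := measure_ball_lt_top.ne
  set Vt : ℝ := (volume A).toReal with hVt_def
  have hVt : 0 < Vt := ENNReal.toReal_pos hvolA_pos.ne' hvolA_fin
  -- the main constant
  set cc : ℝ := z * (t - s) * ((2:ℝ) ^ (-(d:ℝ)/α) * (c₁/2)) * (εR ^ β / 2) with hcc_def
  have hcc : 0 < cc := by
    rw [hcc_def]
    have h1 : (0:ℝ) < (2:ℝ) ^ (-(d:ℝ)/α) := Real.rpow_pos_of_pos (by norm_num) _
    have h2 : (0:ℝ) < εR ^ β := Real.rpow_pos_of_pos hεR _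
    have h3 : (0:ℝ) < t - s := by linarith
    positivity
  refine ⟨cc * (m - u) * Vt, mul_pos (mul_pos hcc (by linarith)) hVt, T₀, hT₀pos, fun T hT => ?_⟩
  -- facts about T
  have hTt : t ≤ T := le_trans (le_trans (le_max_left t 1) (le_max_left _ _)) hT
  have hT1 : (1:ℝ) ≤ T := le_trans hT₀1 hT
  have hTpos : (0:ℝ) < T := by linarith
  have hsTm1 : 1 ≤ s + T - m := by
    have h := le_trans (le_max_right (max t 1) _) hT
    have h2 : (1:ℝ) ≤ max X 1 := le_max_right X 1
    linarith
  have hsTmX : X ≤ s + T - m := by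
    have h := le_trans (le_max_right (max t 1) _) hT
    have h2 : X ≤ max X 1 := le_max_left X 1
    linarith
  have hTepos : (0:ℝ) < T ^ (-(d:ℝ)/α) := Real.rpow_pos_of_pos hTpos _
  -- the pointwise key inequality
  have key : ∀ x ∈ A, ∀ r ∈ Set.Ioc u m,
      cc * T ^ (-(d:ℝ)/α) ≤
        (U T x r + R x r) ^ (1 + β) - (U T x r) ^ (1 + β) - (R x r) ^ (1 + β) := by
    intro x hxA r hr
    obtain ⟨hru, hrm⟩ := hr
    obtain ⟨hx12, hx1⟩ := hAnorm x hxA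
    have hr0 : 0 ≤ r := le_trans hu hru.le
    have hmeas : Measurable fun r' : ℝ => pker d α q (r' - r) x :=
      (pker_meas hqm x).comp (measurable_id.sub_const r)
    -- R value and lower bound
    have hRval : R x r = ∫ r' in r..v, pker d α q (r' - r) x := by
      have hnm : r ∉ Set.Icc (0:ℝ) u := fun h => absurd h.2 (not_le.2 hru)
      have hmem : r ∈ Set.Ioc u v := ⟨hru, le_trans hrm hmv.le⟩
      rw [hR x r, Set.indicator_of_notMem hnm, Set.indicator_of_mem hmem, zero_add]
    have hint1 : IntervalIntegrable (fun r' => pker d α q (r' - r) x) volume r m2 := by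
      refine interval_integrable_of_bdd (M := c₂ * 2 ^ ((d:ℝ) + α) * (v - u)) hmeas
        (by linarith) fun y hy => ?_
      rw [abs_of_nonneg (pker_nonneg hq0 (by linarith [hy.1]) x)]
      exact pker_upL (L := v - u) hα0 hd hc₂ hq0 hq2 (by linarith [hy.1])
        (by linarith [hy.2]) hx12
    have hint2 : IntervalIntegrable (fun r' => pker d α q (r' - r) x) volume m2 v := by
      refine interval_integrable_of_bdd (M := c₂ * 2 ^ ((d:ℝ) + α) * (v - u)) hmeas
        (by linarith) fun y hy => ?_
      rw [abs_of_nonneg (pker_nonneg hq0 (by linarith [hy.1]) x)]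
      exact pker_upL (L := v - u) hα0 hd hc₂ hq0 hq2 (by linarith [hy.1])
        (by linarith [hy.2]) hx12
    have hRlow : εR ≤ R x r := by
      rw [hRval, ← intervalIntegral.integral_add_adjacent_intervals hint1 hint2]
      have h1 : 0 ≤ ∫ r' in r..m2, pker d α q (r' - r) x :=
        intervalIntegral.integral_nonneg (by linarith)
          (fun y hy => pker_nonneg hq0 (by linarith [hy.1]) x)
      have h2 : (v - m2) * εpt ≤ ∫ r' in m2..v, pker d α q (r' - r) x := by
        have hmono := intervalIntegral.integral_mono_on (le_of_lt hm2v)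
          (intervalIntegrable_const (c := εpt)) hint2
          (fun y hy => pker_low hα0 hd hc₁ hq1 (by linarith : (0:ℝ) < m2 - m)
            (by linarith [hy.1] : m2 - m ≤ y - r) (by linarith [hy.2] : y - r ≤ v - u) hx1)
        rw [intervalIntegral.integral_const, smul_eq_mul] at hmono
        exact hmono
      rw [hεR_def]
      linarith
    have hRpos : 0 < R x r := lt_of_lt_of_le hεR hRlow
    -- U value and bounds
    have hUval : U T x r = z * ∫ r' in (s+T)..(t+T), pker d α q (r' - r) x := by
      have hmem : r ∈ Set.Icc (0:ℝ) (s + T) := ⟨hr0, by linarith⟩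
      have hnm : r ∉ Set.Ioc (s + T) (t + T) := fun h => absurd h.1 (by push_neg; linarith)
      rw [hU T x r, Set.indicator_of_mem hmem, Set.indicator_of_notMem hnm, add_zero]
    have hint3 : IntervalIntegrable (fun r' => pker d α q (r' - r) x) volume (s+T) (t+T) := by
      refine interval_integrable_of_bdd (M := c₂) hmeas (by linarith) fun y hy => ?_
      have hy1 : 1 ≤ y - r := by linarith [hy.1]
      rw [abs_of_nonneg (pker_nonneg hq0 (by linarith) x)]
      calc pker d α q (y - r) x ≤ (y - r) ^ (-(d:ℝ)/α) * c₂ :=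
            pker_upC hα0 hc₂ hq2 (by linarith) x
        _ ≤ 1 * c₂ := by
            have := Real.rpow_le_one_of_one_le_of_nonpos hy1 hed
            exact mul_le_mul_of_nonneg_right this hc₂.le
        _ = c₂ := one_mul c₂
    have hUlow : z * (t - s) * ((2*T) ^ (-(d:ℝ)/α) * (c₁/2)) ≤ U T x r := by
      rw [hUval]
      have hsimp : ((1:ℝ) ^ (-(1:ℝ)/α)) ^ ((d:ℝ) + α) = 1 := by
        rw [Real.one_rpow, Real.one_rpow]
      have hmono := intervalIntegral.integral_mono_on (by linarith : s + T ≤ t + T)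
        (intervalIntegrable_const
          (c := (2*T) ^ (-(d:ℝ)/α) * (c₁ / (1 + ((1:ℝ) ^ (-(1:ℝ)/α)) ^ ((d:ℝ) + α)))))
        hint3
        (fun y hy => pker_low hα0 hd hc₁ hq1 one_pos
          (by linarith [hy.1] : (1:ℝ) ≤ y - r) (by linarith [hy.2] : y - r ≤ 2*T) hx1)
      rw [intervalIntegral.integral_const, smul_eq_mul, hsimp] at hmono
      have heq : (t + T - (s + T)) = t - s := by ring
      rw [heq] at hmono
      have h2 : (t - s) * ((2*T) ^ (-(d:ℝ)/α) * (c₁/2)) ≤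
          ∫ r' in (s+T)..(t+T), pker d α q (r' - r) x := by
        have : c₁ / (1 + 1) = c₁ / 2 := by norm_num
        rw [this] at hmono
        exact hmono
      calc z * (t - s) * ((2*T) ^ (-(d:ℝ)/α) * (c₁/2))
          = z * ((t - s) * ((2*T) ^ (-(d:ℝ)/α) * (c₁/2))) := by ring
        _ ≤ z * ∫ r' in (s+T)..(t+T), pker d α q (r' - r) x :=
            mul_le_mul_of_nonneg_left h2 hz.le
    have hUup : U T x r ≤ z * (t - s) * c₂ * (s + T - m) ^ (-(d:ℝ)/α) := by
      rw [hUval]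
      have hmono := intervalIntegral.integral_mono_on (by linarith : s + T ≤ t + T)
        hint3 (intervalIntegrable_const (c := (s + T - m) ^ (-(d:ℝ)/α) * c₂))
        (fun y hy => ?_)
      · rw [intervalIntegral.integral_const, smul_eq_mul] at hmono
        have heq : (t + T - (s + T)) = t - s := by ring
        rw [heq] at hmono
        calc z * ∫ r' in (s+T)..(t+T), pker d α q (r' - r) x
            ≤ z * ((t - s) * ((s + T - m) ^ (-(d:ℝ)/α) * c₂)) :=
              mul_le_mul_of_nonneg_left hmono hz.le
          _ = z * (t - s) * c₂ * (s + T - m) ^ (-(d:ℝ)/α) := by ring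
      · calc pker d α q (y - r) x ≤ (y - r) ^ (-(d:ℝ)/α) * c₂ :=
              pker_upC hα0 hc₂ hq2 (by linarith [hy.1]) x
          _ ≤ (s + T - m) ^ (-(d:ℝ)/α) * c₂ := by
              refine mul_le_mul_of_nonneg_right ?_ hc₂.le
              exact Real.rpow_le_rpow_of_nonpos (by linarith) (by linarith [hy.1]) hed
    have hUδ : U T x r < δ := by
      have h1 : (s + T - m) ^ (-((d:ℝ)/α)) < δ₀ := hX _ hsTmX
      have h2 : -(d:ℝ)/α = -((d:ℝ)/α) := by ring
      have h3 : z * (t - s) * c₂ * (s + T - m) ^ (-(d:ℝ)/α) < z * (t - s) * c₂ * δ₀ := by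
        rw [h2]
        exact mul_lt_mul_of_pos_left h1 hzts
      have h4 : z * (t - s) * c₂ * δ₀ = δ := by
        rw [hδ₀_def]
        field_simp
        exact div_self (sub_ne_zero.2 hst.ne')
      linarith
    have hUpos : 0 < U T x r := by
      have h1 : (0:ℝ) < (2*T) ^ (-(d:ℝ)/α) := Real.rpow_pos_of_pos (by linarith) _
      have : (0:ℝ) < z * (t - s) * ((2*T) ^ (-(d:ℝ)/α) * (c₁/2)) := by
        have h3 : (0:ℝ) < t - s := by linarith
        positivity
      linarith
    -- combine
    have hba : (U T x r) ^ β ≤ (R x r) ^ β / 2 := by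
      calc (U T x r) ^ β ≤ δ ^ β := Real.rpow_le_rpow hUpos.le hUδ.le hβ0.le
        _ = εR ^ β / 2 := hδβ
        _ ≤ (R x r) ^ β / 2 := by
            have := Real.rpow_le_rpow hεR.le hRlow hβ0.le
            linarith
    have hkey := key_ineq hβ0 hRpos hUpos hba
    have hfinal : cc * T ^ (-(d:ℝ)/α) ≤ U T x r * ((R x r) ^ β / 2) := by
      have h2T : (2*T) ^ (-(d:ℝ)/α) = (2:ℝ) ^ (-(d:ℝ)/α) * T ^ (-(d:ℝ)/α) :=
        Real.mul_rpow (by norm_num) hTpos.le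
      have hRβ : εR ^ β / 2 ≤ (R x r) ^ β / 2 := by
        have := Real.rpow_le_rpow hεR.le hRlow hβ0.le
        linarith
      have hUl : z * (t - s) * ((2:ℝ) ^ (-(d:ℝ)/α) * (c₁/2)) * T ^ (-(d:ℝ)/α) ≤ U T x r := by
        rw [show z * (t - s) * ((2:ℝ) ^ (-(d:ℝ)/α) * (c₁/2)) * T ^ (-(d:ℝ)/α)
            = z * (t - s) * ((2:ℝ) ^ (-(d:ℝ)/α) * T ^ (-(d:ℝ)/α) * (c₁/2)) by ring,
          ← h2T]
        exact hUlow
      have hULpos : 0 < z * (t - s) * ((2:ℝ) ^ (-(d:ℝ)/α) * (c₁/2)) * T ^ (-(d:ℝ)/α) := by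
        have h1 : (0:ℝ) < (2:ℝ) ^ (-(d:ℝ)/α) := Real.rpow_pos_of_pos (by norm_num) _
        have h3 : (0:ℝ) < t - s := by linarith
        positivity
      have hεRβpos : 0 ≤ εR ^ β / 2 := by positivity
      calc cc * T ^ (-(d:ℝ)/α)
          = (z * (t - s) * ((2:ℝ) ^ (-(d:ℝ)/α) * (c₁/2)) * T ^ (-(d:ℝ)/α)) * (εR ^ β / 2) := by
            rw [hcc_def]; ring
        _ ≤ U T x r * ((R x r) ^ β / 2) :=
            mul_le_mul hUl hRβ hεRβpos hUpos.le
    linarith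
  -- now the integral lower bound
  have hccT : 0 ≤ cc * T ^ (-(d:ℝ)/α) := by positivity
  have hccTmu : 0 ≤ cc * T ^ (-(d:ℝ)/α) * (m - u) := by
    have : (0:ℝ) ≤ m - u := by linarith
    positivity
  calc ENNReal.ofReal (cc * (m - u) * Vt * T ^ (-(d:ℝ)/α))
      = ENNReal.ofReal (cc * T ^ (-(d:ℝ)/α) * (m - u)) * volume A := by
        rw [← ENNReal.ofReal_toReal hvolA_fin, ← hVt_def,
          ← ENNReal.ofReal_mul hccTmu]
        congr 1
        ring
    _ = ∫⁻ x, A.indicator (fun _ => ENNReal.ofReal (cc * T ^ (-(d:ℝ)/α) * (m - u))) x := by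
        rw [lintegral_indicator_const (by rw [hA_def]; exact measurableSet_ball)]
    _ ≤ ∫⁻ x : EuclideanSpace ℝ (Fin d), ∫⁻ r in Set.Ioi (0:ℝ),
          ENNReal.ofReal
            ((U T x r + R x r) ^ (1 + β) - (U T x r) ^ (1 + β) - (R x r) ^ (1 + β)) := by
        refine lintegral_mono fun x => ?_
        by_cases hxA : x ∈ A
        · rw [Set.indicator_of_mem hxA]
          have step : ENNReal.ofReal (cc * T ^ (-(d:ℝ)/α) * (m - u)) =
              ∫⁻ r in Set.Ioi (0:ℝ),
                (Set.Ioc u m).indicator (fun _ => ENNReal.ofReal (cc * T ^ (-(d:ℝ)/α))) r := by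
            rw [lintegral_indicator measurableSet_Ioc, Measure.restrict_restrict measurableSet_Ioc]
            have hsub : Set.Ioc u m ∩ Set.Ioi (0:ℝ) = Set.Ioc u m := by
              apply Set.inter_eq_self_of_subset_left
              intro y hy
              exact lt_of_le_of_lt hu hy.1
            rw [hsub, setLIntegral_const, Real.volume_Ioc,
              ← ENNReal.ofReal_mul hccT]
          rw [step]
          refine lintegral_mono fun r => ?_
          by_cases hrI : r ∈ Set.Ioc u m
          · rw [Set.indicator_of_mem hrI]
            exact ENNReal.ofReal_le_ofReal (key x hxA r hrI)
          · rw [Set.indicator_of_notMem hrI]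
            exact zero_le
        · rw [Set.indicator_of_notMem hxA]
          exact zero_le
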